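/- Let q, z, t, s be complex numbers with q ≠ 0, s ≠ 0, z·q² ≠ 1 and t ≠ 1. Let T(z,t), T_rev(z) be the 4×4 matrices defined in the context, and let D_c be the 4×4 complex matrix (with s playing the role of q^{2c}) with rows: row 1 = [ (t·s^{−1}q^{−2} − 1)(t·s^{−1}q^{−4} − 1), −t·(t − s·q²)·(s − 1)·s^{−2}q^{−6}, −t·(t − s·q²)·(s − 1)·s^{−2}q^{−6}, t²·(s − q²)·(s − 1)·s^{−2}q^{−8} ]; row 2 = [ 1 − t·s^{−1}q^{−2}, −(t·s^{−1}q^{−2} − 1)·q^{−2}, t·(s − 1)·s^{−1}q^{−4}, t·(s − 1)·s^{−1}q^{−6} ]; row 3 = [ 1 − t·s^{−1}q^{−2}, t·(s·q² − 1)·s^{−1}q^{−4}, −(s^{−1}t − 1)·q^{−4}, t·(s − 1)·s^{−1}q^{−6} ]; row 4 = [ 1, q^{−4}, q^{−4}, q^{−8} ]. Then T(z,t)·D_c = D_c·(T_rev(z))ᵀ. -/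

import Mathlib

open Matrix

/-- The reversed non-dynamic two-site stochastic six-vertex transfer matrix. -/
noncomputable def Trev (q z : ℂ) : Matrix (Fin 4) (Fin 4) ℂ :=
  !![1, 0, 0, 0;
     0, (q ^ 2 - 1) / (z * q ^ 2 - 1), q ^ 2 * (z - 1) / (z * q ^ 2 - 1), 0;
     0, (z - 1) / (z * q ^ 2 - 1), z * (q ^ 2 - 1) / (z * q ^ 2 - 1), 0;
     0, 0, 0, 1]

/-- The dynamic two-site stochastic six-vertex transfer matrix, with dynamic
parameter `t = e^{-2πiλ}`. -/
noncomputable def Tdyn (q z t : ℂ) : Matrix (Fin 4) (Fin 4) ℂ :=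
  !![1, 0, 0, 0;
     0, (q ^ 2 - 1) * (1 - t * z) / ((z * q ^ 2 - 1) * (1 - t)),
        (q ^ 2 - t) * (z - 1) / ((z * q ^ 2 - 1) * (1 - t)), 0;
     0, (z - 1) * (1 - t * q ^ 2) / ((z * q ^ 2 - 1) * (1 - t)),
        (q ^ 2 - 1) * (z - t) / ((z * q ^ 2 - 1) * (1 - t)), 0;
     0, 0, 0, 1]

/-- The two-site duality matrix `D_c`, with `s = q^{2c}` and `t = e^{-2πiλ}`. -/
noncomputable def Dc (q s t : ℂ) : Matrix (Fin 4) (Fin 4) ℂ :=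
  !![(t * s⁻¹ * q ^ (-2 : ℤ) - 1) * (t * s⁻¹ * q ^ (-4 : ℤ) - 1),
       -t * (t - s * q ^ 2) * (s - 1) * s ^ (-2 : ℤ) * q ^ (-6 : ℤ),
       -t * (t - s * q ^ 2) * (s - 1) * s ^ (-2 : ℤ) * q ^ (-6 : ℤ),
       t ^ 2 * (s - q ^ 2) * (s - 1) * s ^ (-2 : ℤ) * q ^ (-8 : ℤ);
     1 - t * s⁻¹ * q ^ (-2 : ℤ),
       -(t * s⁻¹ * q ^ (-2 : ℤ) - 1) * q ^ (-2 : ℤ),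
       t * (s - 1) * s⁻¹ * q ^ (-4 : ℤ),
       t * (s - 1) * s⁻¹ * q ^ (-6 : ℤ);
     1 - t * s⁻¹ * q ^ (-2 : ℤ),
       t * (s * q ^ 2 - 1) * s⁻¹ * q ^ (-4 : ℤ),
       -(s⁻¹ * t - 1) * q ^ (-4 : ℤ),
       t * (s - 1) * s⁻¹ * q ^ (-6 : ℤ);
     1, q ^ (-4 : ℤ), q ^ (-4 : ℤ), q ^ (-8 : ℤ)]

section Aux

theorem fin4_ext' {a₁₁ a₁₂ a₁₃ a₁₄ a₂₁ a₂₂ a₂₃ a₂₄ a₃₁ a₃₂ a₃₃ a₃₄ a₄₁ a₄₂ a₄₃ a₄₄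
    b₁₁ b₁₂ b₁₃ b₁₄ b₂₁ b₂₂ b₂₃ b₂₄ b₃₁ b₃₂ b₃₃ b₃₄ b₄₁ b₄₂ b₄₃ b₄₄ : ℂ}
    (h11 : a₁₁ = b₁₁) (h12 : a₁₂ = b₁₂) (h13 : a₁₃ = b₁₃) (h14 : a₁₄ = b₁₄)
    (h21 : a₂₁ = b₂₁) (h22 : a₂₂ = b₂₂) (h23 : a₂₃ = b₂₃) (h24 : a₂₄ = b₂₄)
    (h31 : a₃₁ = b₃₁) (h32 : a₃₂ = b₃₂) (h33 : a₃₃ = b₃₃) (h34 : a₃₄ = b₃₄)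
    (h41 : a₄₁ = b₄₁) (h42 : a₄₂ = b₄₂) (h43 : a₄₃ = b₄₃) (h44 : a₄₄ = b₄₄) :
    !![a₁₁, a₁₂, a₁₃, a₁₄; a₂₁, a₂₂, a₂₃, a₂₄; a₃₁, a₃₂, a₃₃, a₃₄; a₄₁, a₄₂, a₄₃, a₄₄] =
    !![b₁₁, b₁₂, b₁₃, b₁₄; b₂₁, b₂₂, b₂₃, b₂₄; b₃₁, b₃₂, b₃₃, b₃₄; b₄₁, b₄₂, b₄₃, b₄₄] := by
  subst_vars; rfl

theorem smul_fin4 (c : ℂ) (a₁₁ a₁₂ a₁₃ a₁₄ a₂₁ a₂₂ a₂₃ a₂₄ a₃₁ a₃₂ a₃₃ a₃₄ a₄₁ a₄₂ a₄₃ a₄₄ : ℂ) :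
    c • !![a₁₁, a₁₂, a₁₃, a₁₄; a₂₁, a₂₂, a₂₃, a₂₄; a₃₁, a₃₂, a₃₃, a₃₄; a₄₁, a₄₂, a₄₃, a₄₄] =
    !![c*a₁₁, c*a₁₂, c*a₁₃, c*a₁₄; c*a₂₁, c*a₂₂, c*a₂₃, c*a₂₄;
       c*a₃₁, c*a₃₂, c*a₃₃, c*a₃₄; c*a₄₁, c*a₄₂, c*a₄₃, c*a₄₄] := by
  ext i j
  fin_cases i <;> fin_cases j <;> simp

theorem transpose_fin4 (a₁₁ a₁₂ a₁₃ a₁₄ a₂₁ a₂₂ a₂₃ a₂₄ a₃₁ a₃₂ a₃₃ a₃₄ a₄₁ a₄₂ a₄₃ a₄₄ : ℂ) :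
    (!![a₁₁, a₁₂, a₁₃, a₁₄; a₂₁, a₂₂, a₂₃, a₂₄; a₃₁, a₃₂, a₃₃, a₃₄; a₄₁, a₄₂, a₄₃, a₄₄])ᵀ =
    !![a₁₁, a₂₁, a₃₁, a₄₁; a₁₂, a₂₂, a₃₂, a₄₂; a₁₃, a₂₃, a₃₃, a₄₃; a₁₄, a₂₄, a₃₄, a₄₄] := by
  ext i j
  fin_cases i <;> fin_cases j <;> rfl

theorem mul_fin4 (a₁₁ a₁₂ a₁₃ a₁₄ a₂₁ a₂₂ a₂₃ a₂₄ a₃₁ a₃₂ a₃₃ a₃₄ a₄₁ a₄₂ a₄₃ a₄₄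
    b₁₁ b₁₂ b₁₃ b₁₄ b₂₁ b₂₂ b₂₃ b₂₄ b₃₁ b₃₂ b₃₃ b₃₄ b₄₁ b₄₂ b₄₃ b₄₄ : ℂ) :
    !![a₁₁, a₁₂, a₁₃, a₁₄; a₂₁, a₂₂, a₂₃, a₂₄; a₃₁, a₃₂, a₃₃, a₃₄; a₄₁, a₄₂, a₄₃, a₄₄] *
    !![b₁₁, b₁₂, b₁₃, b₁₄; b₂₁, b₂₂, b₂₃, b₂₄; b₃₁, b₃₂, b₃₃, b₃₄; b₄₁, b₄₂, b₄₃, b₄₄] =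
    !![a₁₁*b₁₁ + a₁₂*b₂₁ + a₁₃*b₃₁ + a₁₄*b₄₁, a₁₁*b₁₂ + a₁₂*b₂₂ + a₁₃*b₃₂ + a₁₄*b₄₂,
         a₁₁*b₁₃ + a₁₂*b₂₃ + a₁₃*b₃₃ + a₁₄*b₄₃, a₁₁*b₁₄ + a₁₂*b₂₄ + a₁₃*b₃₄ + a₁₄*b₄₄;
       a₂₁*b₁₁ + a₂₂*b₂₁ + a₂₃*b₃₁ + a₂₄*b₄₁, a₂₁*b₁₂ + a₂₂*b₂₂ + a₂₃*b₃₂ + a₂₄*b₄₂,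
         a₂₁*b₁₃ + a₂₂*b₂₃ + a₂₃*b₃₃ + a₂₄*b₄₃, a₂₁*b₁₄ + a₂₂*b₂₄ + a₂₃*b₃₄ + a₂₄*b₄₄;
       a₃₁*b₁₁ + a₃₂*b₂₁ + a₃₃*b₃₁ + a₃₄*b₄₁, a₃₁*b₁₂ + a₃₂*b₂₂ + a₃₃*b₃₂ + a₃₄*b₄₂,
         a₃₁*b₁₃ + a₃₂*b₂₃ + a₃₃*b₃₃ + a₃₄*b₄₃, a₃₁*b₁₄ + a₃₂*b₂₄ + a₃₃*b₃₄ + a₃₄*b₄₄;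
       a₄₁*b₁₁ + a₄₂*b₂₁ + a₄₃*b₃₁ + a₄₄*b₄₁, a₄₁*b₁₂ + a₄₂*b₂₂ + a₄₃*b₃₂ + a₄₄*b₄₂,
         a₄₁*b₁₃ + a₄₂*b₂₃ + a₄₃*b₃₃ + a₄₄*b₄₃, a₄₁*b₁₄ + a₄₂*b₂₄ + a₄₃*b₃₄ + a₄₄*b₄₄] := by
  ext i j
  fin_cases i <;> fin_cases j <;>
    simp [Matrix.mul_apply, Fin.sum_univ_four]

/-- Numerator matrix of `Tdyn`. -/
noncomputable def Pm (q z t : ℂ) : Matrix (Fin 4) (Fin 4) ℂ :=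
  !![(z * q ^ 2 - 1) * (1 - t), 0, 0, 0;
     0, (q ^ 2 - 1) * (1 - t * z), (q ^ 2 - t) * (z - 1), 0;
     0, (z - 1) * (1 - t * q ^ 2), (q ^ 2 - 1) * (z - t), 0;
     0, 0, 0, (z * q ^ 2 - 1) * (1 - t)]

/-- Numerator matrix of `Trev`. -/
noncomputable def Rm (q z : ℂ) : Matrix (Fin 4) (Fin 4) ℂ :=
  !![z * q ^ 2 - 1, 0, 0, 0;
     0, q ^ 2 - 1, q ^ 2 * (z - 1), 0;
     0, z - 1, z * (q ^ 2 - 1), 0;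
     0, 0, 0, z * q ^ 2 - 1]

/-- Numerator matrix of `Dc`. -/
noncomputable def Qm (q s t : ℂ) : Matrix (Fin 4) (Fin 4) ℂ :=
  !![t ^ 2 * q ^ 2 - t * s * q ^ 6 - t * s * q ^ 4 + s ^ 2 * q ^ 8,
       -t * (t - s * q ^ 2) * (s - 1) * q ^ 2,
       -t * (t - s * q ^ 2) * (s - 1) * q ^ 2,
       t ^ 2 * (s - q ^ 2) * (s - 1);
     s ^ 2 * q ^ 8 - t * s * q ^ 6, s ^ 2 * q ^ 6 - t * s * q ^ 4,
       t * (s - 1) * s * q ^ 4, t * (s - 1) * s * q ^ 2;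
     s ^ 2 * q ^ 8 - t * s * q ^ 6, t * (s * q ^ 2 - 1) * s * q ^ 4,
       (s ^ 2 - t * s) * q ^ 4, t * (s - 1) * s * q ^ 2;
     s ^ 2 * q ^ 8, s ^ 2 * q ^ 4, s ^ 2 * q ^ 4, s ^ 2]

theorem Tdyn_eq_smul (q z t : ℂ) (hz' : z * q ^ 2 - 1 ≠ 0) (ht' : 1 - t ≠ 0) :
    Tdyn q z t = ((z * q ^ 2 - 1) * (1 - t))⁻¹ • Pm q z t := by
  rw [Tdyn, Pm, smul_fin4]
  apply fin4_ext' <;> field_simp <;> simp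

theorem Trev_eq_smul (q z : ℂ) (hz' : z * q ^ 2 - 1 ≠ 0) :
    Trev q z = (z * q ^ 2 - 1)⁻¹ • Rm q z := by
  rw [Trev, Rm, smul_fin4]
  apply fin4_ext' <;> field_simp <;> simp

theorem Dc_eq_smul (q s t : ℂ) (hq : q ≠ 0) (hs : s ≠ 0) :
    Dc q s t = (s ^ 2 * q ^ 8)⁻¹ • Qm q s t := by
  have e2 : q ^ (-2 : ℤ) = (q ^ 2)⁻¹ := by rw [_root_.zpow_neg]; norm_cast
  have e4 : q ^ (-4 : ℤ) = (q ^ 4)⁻¹ := by rw [_root_.zpow_neg]; norm_cast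
  have e6 : q ^ (-6 : ℤ) = (q ^ 6)⁻¹ := by rw [_root_.zpow_neg]; norm_cast
  have e8 : q ^ (-8 : ℤ) = (q ^ 8)⁻¹ := by rw [_root_.zpow_neg]; norm_cast
  have es : s ^ (-2 : ℤ) = (s ^ 2)⁻¹ := by rw [_root_.zpow_neg]; norm_cast
  rw [Dc, Qm, e2, e4, e6, e8, es, smul_fin4]
  apply fin4_ext' <;> field_simp <;> ring

theorem key_poly (q z t s : ℂ) :
    Pm q z t * Qm q s t = (1 - t) • (Qm q s t * (Rm q z)ᵀ) := by
  rw [Pm, Qm, Rm, transpose_fin4, mul_fin4, mul_fin4, smul_fin4]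
  apply fin4_ext' <;> ring

end Aux

/-- The two-site duality `𝒯^{stoch}(z,λ) D_c = D_c (𝒯^{stoch}_rev(z,−i∞))*` between the
dynamic stochastic six-vertex model and the reversed non-dynamic one. -/
theorem Tdyn_duality_Dc (q z t s : ℂ)
    (hq : q ≠ 0) (hs : s ≠ 0) (hz : z * q ^ 2 ≠ 1) (ht : t ≠ 1) :
    Tdyn q z t * Dc q s t = Dc q s t * (Trev q z)ᵀ := by
  have hz' : z * q ^ 2 - 1 ≠ 0 := sub_ne_zero.mpr hz
  have ht' : 1 - t ≠ 0 := sub_ne_zero.mpr (Ne.symm ht)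
  have hc₂ : s ^ 2 * q ^ 8 ≠ 0 := mul_ne_zero (pow_ne_zero _ hs) (pow_ne_zero _ hq)
  rw [Tdyn_eq_smul q z t hz' ht', Trev_eq_smul q z hz', Dc_eq_smul q s t hq hs,
    Matrix.transpose_smul, Matrix.smul_mul, Matrix.mul_smul, Matrix.smul_mul,
    Matrix.mul_smul, key_poly, smul_smul, smul_smul, smul_smul]
  congr 1
  field_simp
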